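/- arXiv:math/0405424 — 3 statements merged into one kernel-verified Lean document; each statement's English description precedes it below -/
import Mathlib

section
/- If two quaternions x and y have linearly dependent imaginary parts, then exp(x + y) = exp(x) * exp(y). -/
open scoped Quaternion
open NormedSpace Quaternion

lemma aux6 (a b : ℍ[ℝ]) (s : ℝ) (h : b.im = s • a.im) : Commute a b := by
  rw [← a.re_add_im, ← b.re_add_im, h]
  exact ((Quaternion.coe_commute b.re _).symm).add_right
    (((Quaternion.coe_commute a.re _)).add_left ((Commute.refl a.im).smul_right s))

theorem stmt6 (x y : ℍ[ℝ]) (h : ∃ s : ℝ, y.im = s • x.im ∨ x.im = s • y.im) :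
    NormedSpace.exp (x + y) = NormedSpace.exp x * NormedSpace.exp y := by
  obtain ⟨s, h | h⟩ := h
  · exact exp_add_of_commute_of_mem_ball (𝕂 := ℝ) (aux6 x y s h) ((expSeries_radius_eq_top ℝ ℍ[ℝ]).symm ▸ edist_lt_top _ _) ((expSeries_radius_eq_top ℝ ℍ[ℝ]).symm ▸ edist_lt_top _ _)
  · exact exp_add_of_commute_of_mem_ball (𝕂 := ℝ) (aux6 y x s h).symm ((expSeries_radius_eq_top ℝ ℍ[ℝ]).symm ▸ edist_lt_top _ _) ((expSeries_radius_eq_top ℝ ℍ[ℝ]).symm ▸ edist_lt_top _ _)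
end

section
/- The exponential map restricted to pure imaginary quaternions is surjective onto the unit sphere of ℍ: for every quaternion y with ‖y‖ = 1 there exists a pure imaginary quaternion a with exp(a) = y. -/
open scoped Quaternion
open NormedSpace Quaternion

theorem stmt13 (y : ℍ[ℝ]) (hy : ‖y‖ = 1) : ∃ a : ℍ[ℝ], a.re = 0 ∧ exp a = y := by
  have hns : normSq y = 1 := by
    rw [Quaternion.normSq_eq_norm_mul_self, hy, one_mul]
  have him : ‖y.im‖ ^ 2 = 1 - y.re ^ 2 := by
    rw [sq, ← Quaternion.normSq_eq_norm_mul_self]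
    have h1 : normSq y.im = normSq y - y.re ^ 2 := by
      simp [Quaternion.normSq_def']; ring
    rw [h1, hns]
  have hre_mem : -1 ≤ y.re ∧ y.re ≤ 1 := by
    constructor <;> nlinarith [sq_nonneg ‖y.im‖, sq_nonneg (y.re - 1), sq_nonneg (y.re + 1)]
  set θ := Real.arccos y.re with hθ
  have hsin : Real.sin θ = ‖y.im‖ := by
    rw [hθ, Real.sin_arccos, ← him, Real.sqrt_sq (norm_nonneg _)]
  have hcos : Real.cos θ = y.re := Real.cos_arccos hre_mem.1 hre_mem.2
  by_cases h0 : y.im = 0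
  · have hyre : y = (y.re : ℍ[ℝ]) := by
      have := Quaternion.re_add_im y
      rw [h0, add_zero] at this; exact this.symm
    by_cases hr : y.re = 1
    · exact ⟨0, rfl, by rw [exp_zero, hyre, hr]; norm_num⟩
    · have hrm : y.re = -1 := by
        have h2 : (y.re - 1) * (y.re + 1) = 0 := by
          have : ‖y.im‖ = 0 := by rw [h0, norm_zero]
          nlinarith
        rcases mul_eq_zero.mp h2 with h | h
        · exact absurd (by linarith) hr
        · linarith
      set q : ℍ[ℝ] := ((Real.pi * Complex.I : ℂ) : ℍ[ℝ]) with hq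
      have hqre : q.re = 0 := by simp [hq]
      have hnorm : ‖q‖ = Real.pi := by
        have h2 : ‖q‖ ^ 2 = Real.pi ^ 2 := by
          rw [sq, ← Quaternion.normSq_eq_norm_mul_self, hq]
          simp [Quaternion.normSq_def']
        calc ‖q‖ = Real.sqrt (‖q‖ ^ 2) := (Real.sqrt_sq (norm_nonneg _)).symm
        _ = Real.pi := by rw [h2, Real.sqrt_sq Real.pi_nonneg]
      refine ⟨q, hqre, ?_⟩
      rw [exp_of_re_eq_zero _ hqre, hnorm, Real.sin_pi, Real.cos_pi, hyre, hrm]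
      norm_num
  · have himpos : 0 < ‖y.im‖ := norm_pos_iff.mpr h0
    have hθpos : 0 < θ := by
      rcases (Real.arccos_nonneg y.re).lt_or_eq with h | h
      · exact h
      · exfalso
        have : Real.sin θ = 0 := by rw [hθ, ← h, Real.sin_zero]
        rw [this] at hsin
        exact himpos.ne hsin
    refine ⟨(θ / ‖y.im‖) • y.im, ?_, ?_⟩
    · simp [Quaternion.re_smul, Quaternion.re_im]
    · have hare : ((θ / ‖y.im‖) • y.im).re = 0 := by
        simp [Quaternion.re_smul, Quaternion.re_im]
      rw [exp_of_re_eq_zero _ hare]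
      have hna : ‖(θ / ‖y.im‖) • y.im‖ = θ := by
        rw [norm_smul, Real.norm_eq_abs, abs_of_pos (div_pos hθpos himpos),
          div_mul_cancel₀ _ himpos.ne']
      rw [hna, hcos, hsin, smul_smul, div_mul_div_comm, mul_comm,
        ← div_mul_div_comm, div_self hθpos.ne', one_mul,
        div_self himpos.ne', one_smul, Quaternion.re_add_im]
end

section
/- The exponential map exp : ℍ → ℍ \ {0} is surjective: every nonzero quaternion y equals exp(x) for some quaternion x. -/
open scoped Quaternion
open NormedSpace Quaternion

private lemma normsq_split (y : ℍ[ℝ]) : ‖y‖ ^ 2 = y.re ^ 2 + ‖y.im‖ ^ 2 := by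
  have h1 : ‖y‖ ^ 2 = Quaternion.normSq y := by
    rw [Quaternion.normSq_eq_norm_mul_self, sq]
  have h2 : ‖y.im‖ ^ 2 = Quaternion.normSq y.im := by
    rw [Quaternion.normSq_eq_norm_mul_self, sq]
  rw [h1, h2, Quaternion.normSq_def', Quaternion.normSq_def']
  simp [Quaternion.im, QuaternionAlgebra.im]
  ring

theorem stmt14 (y : ℍ[ℝ]) (hy : y ≠ 0) : ∃ x : ℍ[ℝ], NormedSpace.exp x = y := by
  have hr : (0:ℝ) < ‖y‖ := norm_pos_iff.mpr hy
  set r := ‖y‖ with hrdef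
  by_cases him : y.im = 0
  · -- y is real
    have hyre : y = (y.re : ℍ[ℝ]) := by
      have := y.re_add_im
      rw [him, add_zero] at this
      exact this.symm
    rcases lt_or_gt_of_ne (fun h : y.re = 0 => hy (by rw [hyre, h]; simp)) with hneg | hpos
    · -- y.re < 0
      set i : Quaternion ℝ := ⟨0,1,0,0⟩ with hidef
      have hinorm : ‖i‖ = 1 := by
        have h1 : ‖i‖ ^ 2 = Quaternion.normSq i := by
          rw [Quaternion.normSq_eq_norm_mul_self, sq]
        have h2 : Quaternion.normSq i = 1 := by
          rw [Quaternion.normSq_def']; simp [hidef]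
        nlinarith [norm_nonneg i]
      refine ⟨(Real.log (-y.re) : ℍ[ℝ]) + Real.pi • i, ?_⟩
      have hx : ((Real.log (-y.re) : ℍ[ℝ]) + Real.pi • i).im = Real.pi • i := by
        ext <;> simp [hidef, Quaternion.im, QuaternionAlgebra.im] <;> exact (mul_zero Real.pi).symm
      have hxre : ((Real.log (-y.re) : ℍ[ℝ]) + Real.pi • i).re = Real.log (-y.re) := by
        simp [hidef]
        exact mul_zero Real.pi
      have hnorm : ‖((Real.log (-y.re) : ℍ[ℝ]) + Real.pi • i).im‖ = Real.pi := by
        rw [hx, norm_smul, hinorm]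
        simp [Real.norm_eq_abs, abs_of_pos Real.pi_pos]
      rw [Quaternion.exp_eq, hxre, hnorm, hx, Real.cos_pi, Real.sin_pi, ← Real.exp_eq_exp_ℝ,
        Real.exp_log (by linarith)]
      rw [hyre]
      simp only [zero_div, zero_smul, add_zero]
      ext <;> simp
    · -- y.re > 0
      refine ⟨(Real.log y.re : ℍ[ℝ]), ?_⟩
      rw [Quaternion.exp_coe, ← Real.exp_eq_exp_ℝ, Real.exp_log hpos, ← hyre]
  · -- y.im ≠ 0
    set s := ‖y.im‖ with hsdef
    have hs : 0 < s := norm_pos_iff.mpr him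
    set θ := Real.arccos (y.re / r) with hθdef
    have habs : |y.re| ≤ r := by
      nlinarith [sq_abs y.re, abs_nonneg y.re, norm_nonneg y, sq_nonneg ‖y.im‖, normsq_split y]
    have hle : y.re / r ≤ 1 := by
      rw [div_le_one hr]; exact le_trans (le_abs_self _) habs
    have hge : -1 ≤ y.re / r := by
      rw [le_div_iff₀ hr, neg_one_mul, neg_le]
      exact le_trans (neg_le_abs _) habs
    have hcos : Real.cos θ = y.re / r := Real.cos_arccos hge hle
    have hsin : Real.sin θ = s / r := by
      rw [hθdef, Real.sin_arccos]
      have h2 := normsq_split y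
      rw [div_pow]
      rw [show (1 : ℝ) - y.re ^ 2 / r ^ 2 = s ^ 2 / r ^ 2 by
        field_simp
        nlinarith]
      rw [show s ^ 2 / r ^ 2 = (s / r) ^ 2 by ring, Real.sqrt_sq (by positivity)]
    have hθ : θ ≠ 0 := by
      intro h
      rw [h, Real.sin_zero] at hsin
      have : s / r > 0 := by positivity
      linarith [hsin]
    refine ⟨(Real.log r : ℍ[ℝ]) + (θ / s) • y.im, ?_⟩
    have hxim : ((Real.log r : ℍ[ℝ]) + (θ / s) • y.im).im = (θ / s) • y.im := by
      simp [Quaternion.im_smul]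
    have hxre : ((Real.log r : ℍ[ℝ]) + (θ / s) • y.im).re = Real.log r := by
      simp
    have hθnn : 0 ≤ θ := Real.arccos_nonneg _
    have hnormim : ‖((Real.log r : ℍ[ℝ]) + (θ / s) • y.im).im‖ = θ := by
      rw [hxim, norm_smul, Real.norm_eq_abs, abs_of_nonneg (by positivity), ← hsdef]
      field_simp
    rw [Quaternion.exp_eq, hxre, hnormim, hxim, hcos, hsin, 
      ← Real.exp_eq_exp_ℝ, Real.exp_log hr, smul_smul]
    rw [show s / r / θ * (θ / s) = r⁻¹ by field_simp]
    rw [smul_add, smul_smul, mul_inv_cancel₀ (ne_of_gt hr), one_smul,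
      Quaternion.smul_coe, mul_div_cancel₀ _ (ne_of_gt hr), y.re_add_im]
end
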